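/- Let Z be a Banach space. The following assertions are equivalent: (a) Z admits a C^p-smooth, Lipschitz bump function; (b) there exist numbers a, b > 0 and a Lipschitz function ψ : Z → [0,∞) which is C^p-smooth on Z \ {0}, homogeneous (ψ(tx) = |t|ψ(x) for all t ∈ ℝ, x ∈ Z), and such that a‖x‖ ≤ ψ(x) ≤ b‖x‖ for all x ∈ Z. -/

import Mathlib

open Function Bornology Set MeasureTheory Real Convolution Filter

lemma aux_lip_of_deriv {f : ℝ → ℝ} (hf : ContDiff ℝ 1 f)
    (h : HasCompactSupport (deriv f)) : ∃ C : NNReal, LipschitzWith C f := by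
  have hc : Continuous (deriv f) := hf.continuous_deriv le_rfl
  have hb : BddAbove (range fun x => ‖deriv f x‖) :=
    hc.norm.bddAbove_range_of_hasCompactSupport h.norm
  obtain ⟨B, hB⟩ := hb
  refine ⟨B.toNNReal, lipschitzWith_of_nnnorm_deriv_le (hf.differentiable one_ne_zero) ?_⟩
  intro x
  have h1 : ‖deriv f x‖ ≤ B := hB ⟨x, rfl⟩
  exact h1.trans (Real.le_coe_toNNReal B)

lemma aux_st_lip : ∃ C : NNReal, LipschitzWith C Real.smoothTransition := by
  apply aux_lip_of_deriv Real.smoothTransition.contDiff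
  apply HasCompactSupport.intro (isCompact_Icc (a := (0:ℝ)) (b := 1))
  intro x hx
  rcases lt_or_gt_of_ne (fun h0 : x = 0 => hx (by simp [h0])) with hlt | hgt
  · have hev : Real.smoothTransition =ᶠ[nhds x] (fun _ => 0) := by
      filter_upwards [eventually_lt_nhds hlt] with y hy
      exact Real.smoothTransition.zero_of_nonpos hy.le
    rw [hev.deriv_eq]; simp
  · have h1 : 1 < x := by
      by_contra hle
      exact hx ⟨hgt.le, not_lt.mp hle⟩
    have hev : Real.smoothTransition =ᶠ[nhds x] (fun _ => 1) := by
      filter_upwards [eventually_gt_nhds h1] with y hy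
      exact Real.smoothTransition.one_of_one_le hy.le
    rw [hev.deriv_eq]; simp

lemma aux_nice_bump {Z : Type*} [NormedAddCommGroup Z] [NormedSpace ℝ Z]
    {p : ℕ∞} (b₀ : Z → ℝ) (hb₀ : ContDiff ℝ p b₀) (K₀ : NNReal) (hlip₀ : LipschitzWith K₀ b₀)
    (hbd : IsBounded (closure (support b₀))) (hne : (support b₀).Nonempty) :
    ∃ (b : Z → ℝ) (δ R : ℝ) (K : NNReal), 0 < δ ∧ 0 < R ∧ ContDiff ℝ p b ∧ LipschitzWith K b ∧
      (∀ z, 0 ≤ b z) ∧ (∀ z, b z ≤ 1) ∧ (∀ z, ‖z‖ ≤ δ → b z = 1) ∧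
      (∀ z, R ≤ ‖z‖ → b z = 0) ∧ (∀ z, b (-z) = b z) := by
  obtain ⟨x₀, hx₀⟩ := hne
  set c := b₀ x₀ with hc_def
  have hc : c ≠ 0 := hx₀
  have hc2 : 0 < c ^ 2 := by positivity
  -- translated bump
  set b₁ : Z → ℝ := fun x => b₀ (x + x₀) with hb₁_def
  have hb₁ : ContDiff ℝ p b₁ := hb₀.comp (contDiff_id.add contDiff_const)
  have hlip₁ : LipschitzWith K₀ b₁ := by
    have : LipschitzWith 1 (fun x : Z => x + x₀) :=
      LipschitzWith.of_dist_le_mul (fun x y => by simp [dist_eq_norm])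
    exact (by simpa using hlip₀.comp this : LipschitzWith K₀ (b₀ ∘ fun x => x + x₀))
  obtain ⟨R₀, hR₀⟩ := hbd.subset_closedBall (0 : Z)
  set R : ℝ := max (R₀ + ‖x₀‖ + 1) 1 with hR_def
  have hRpos : 0 < R := lt_of_lt_of_le one_pos (le_max_right _ _)
  have hzero₁ : ∀ z : Z, R ≤ ‖z‖ → b₁ z = 0 := by
    intro z hz
    by_contra hne0
    have hmem : z + x₀ ∈ closure (support b₀) := subset_closure hne0
    have h1 : ‖z + x₀‖ ≤ R₀ := by simpa using hR₀ hmem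
    have h2 : ‖z‖ ≤ ‖z + x₀‖ + ‖x₀‖ := by
      calc ‖z‖ = ‖(z + x₀) + (-x₀)‖ := by rw [add_neg_cancel_right]
      _ ≤ ‖z + x₀‖ + ‖-x₀‖ := norm_add_le _ _
      _ = ‖z + x₀‖ + ‖x₀‖ := by rw [norm_neg]
    have h3 : R₀ + ‖x₀‖ + 1 ≤ R := le_max_left _ _
    linarith [hz]
  -- the cutoff θ
  set θ : ℝ → ℝ := fun t => Real.smoothTransition ((t ^ 2 - c ^ 2 / 4) / (c ^ 2 / 4)) with hθ_def
  have hθsmooth : ∀ n : ℕ∞, ContDiff ℝ n θ := fun n =>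
    Real.smoothTransition.contDiff.comp ((((contDiff_id.pow 2)).sub contDiff_const).div_const _)
  have hθ0 : ∀ t : ℝ, t ^ 2 ≤ c ^ 2 / 4 → θ t = 0 := by
    intro t ht
    apply Real.smoothTransition.zero_of_nonpos
    apply div_nonpos_of_nonpos_of_nonneg (by linarith) (by positivity)
  have hθ1 : ∀ t : ℝ, c ^ 2 / 2 ≤ t ^ 2 → θ t = 1 := by
    intro t ht
    apply Real.smoothTransition.one_of_one_le
    rw [le_div_iff₀ (by positivity)]
    linarith
  have hθnonneg : ∀ t, 0 ≤ θ t := fun t => Real.smoothTransition.nonneg _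
  have hθle1 : ∀ t, θ t ≤ 1 := fun t => Real.smoothTransition.le_one _
  obtain ⟨Kθ, hKθ⟩ : ∃ C : NNReal, LipschitzWith C θ := by
    apply aux_lip_of_deriv (hθsmooth 1)
    apply HasCompactSupport.intro (isCompact_Icc (a := -(|c| + 1)) (b := |c| + 1))
    intro x hx
    have hx2 : c ^ 2 / 2 < x ^ 2 := by
      rw [mem_Icc, not_and_or, not_le, not_le] at hx
      have habs : |c| + 1 < |x| := by
        rcases hx with h | h
        · rw [abs_of_neg (by linarith [abs_nonneg c] : x < 0)]; linarith
        · rw [abs_of_pos (by linarith [abs_nonneg c] : 0 < x)]; linarith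
      nlinarith [sq_abs x, sq_abs c, abs_nonneg c, abs_nonneg x]
    have hopen : IsOpen {y : ℝ | c ^ 2 / 2 < y ^ 2} := isOpen_lt continuous_const (continuous_pow 2)
    have hev : θ =ᶠ[nhds x] (fun _ => 1) := by
      filter_upwards [hopen.mem_nhds hx2] with y hy
      exact hθ1 y (le_of_lt hy)
    rw [hev.deriv_eq]; simp
  -- composed bump
  set b₂ : Z → ℝ := fun z => θ (b₁ z) with hb₂_def
  have hb₂smooth : ContDiff ℝ p b₂ := (hθsmooth p).comp hb₁
  have hb₂lip : LipschitzWith (Kθ * K₀) b₂ := hKθ.comp hlip₁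
  have hb₂nonneg : ∀ z, 0 ≤ b₂ z := fun z => hθnonneg _
  have hb₂le1 : ∀ z, b₂ z ≤ 1 := fun z => hθle1 _
  have hb₂zero : ∀ z, R ≤ ‖z‖ → b₂ z = 0 := by
    intro z hz
    have : b₁ z = 0 := hzero₁ z hz
    simp only [hb₂_def, this]
    exact hθ0 0 (by nlinarith)
  obtain ⟨δ, hδpos, hδ⟩ : ∃ δ : ℝ, 0 < δ ∧ ∀ z : Z, ‖z‖ ≤ δ → b₂ z = 1 := by
    have hopen : IsOpen {z : Z | c ^ 2 / 2 < (b₁ z) ^ 2} :=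
      isOpen_lt continuous_const (hb₁.continuous.pow 2)
    have h0mem : (0 : Z) ∈ {z : Z | c ^ 2 / 2 < (b₁ z) ^ 2} := by
      simp only [mem_setOf_eq, hb₁_def, zero_add, ← hc_def]
      linarith
    obtain ⟨ε, hεpos, hball⟩ := Metric.isOpen_iff.mp hopen 0 h0mem
    refine ⟨ε / 2, by linarith, fun z hz => ?_⟩
    have hzmem : z ∈ Metric.ball (0 : Z) ε := by
      rw [Metric.mem_ball, dist_zero_right]; linarith
    exact hθ1 _ (le_of_lt (hball hzmem))
  -- symmetrization
  refine ⟨fun z => b₂ z * b₂ (-z), δ, R, Kθ * K₀ + Kθ * K₀, hδpos, hRpos,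
    hb₂smooth.mul (hb₂smooth.comp contDiff_neg), ?_, ?_, ?_, ?_, ?_, ?_⟩
  · apply LipschitzWith.of_dist_le_mul
    intro x y
    have key : b₂ x * b₂ (-x) - b₂ y * b₂ (-y)
        = b₂ x * (b₂ (-x) - b₂ (-y)) + (b₂ x - b₂ y) * b₂ (-y) := by ring
    rw [Real.dist_eq, key]
    have h1 : |b₂ x| ≤ 1 := abs_le.mpr ⟨by linarith [hb₂nonneg x], hb₂le1 x⟩
    have h2 : |b₂ (-y)| ≤ 1 := abs_le.mpr ⟨by linarith [hb₂nonneg (-y)], hb₂le1 (-y)⟩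
    have h3 : |b₂ (-x) - b₂ (-y)| ≤ (Kθ * K₀ : NNReal) * dist x y := by
      have := hb₂lip.dist_le_mul (-x) (-y)
      rw [Real.dist_eq] at this
      simpa [dist_neg_neg] using this
    have h4 : |b₂ x - b₂ y| ≤ (Kθ * K₀ : NNReal) * dist x y := by
      have := hb₂lip.dist_le_mul x y
      rwa [Real.dist_eq] at this
    calc |b₂ x * (b₂ (-x) - b₂ (-y)) + (b₂ x - b₂ y) * b₂ (-y)|
        ≤ |b₂ x * (b₂ (-x) - b₂ (-y))| + |(b₂ x - b₂ y) * b₂ (-y)| := abs_add_le _ _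
      _ = |b₂ x| * |b₂ (-x) - b₂ (-y)| + |b₂ x - b₂ y| * |b₂ (-y)| := by rw [abs_mul, abs_mul]
      _ ≤ 1 * ((Kθ * K₀ : NNReal) * dist x y) + ((Kθ * K₀ : NNReal) * dist x y) * 1 := by
          apply add_le_add
          · exact mul_le_mul h1 h3 (abs_nonneg _) one_pos.le
          · exact mul_le_mul h4 h2 (abs_nonneg _) (by positivity)
      _ = ((Kθ * K₀ + Kθ * K₀ : NNReal) : ℝ) * dist x y := by push_cast; ring
  · exact fun z => mul_nonneg (hb₂nonneg z) (hb₂nonneg (-z))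
  · exact fun z => mul_le_one₀ (hb₂le1 z) (hb₂nonneg (-z)) (hb₂le1 (-z))
  · intro z hz
    show b₂ z * b₂ (-z) = 1
    rw [hδ z hz, hδ (-z) (by rwa [norm_neg]), mul_one]
  · intro z hz
    show b₂ z * b₂ (-z) = 0
    rw [hb₂zero z hz, zero_mul]
  · intro z
    show b₂ (-z) * b₂ (- -z) = b₂ z * b₂ (-z)
    rw [neg_neg, mul_comm]

lemma aux_backward {Z : Type*} [NormedAddCommGroup Z] [NormedSpace ℝ Z]
    {p : ℕ∞} (a b : ℝ) (ha : 0 < a) (hb : 0 < b) (ψ : Z → ℝ)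
    (hlip : ∃ C : NNReal, LipschitzWith C ψ)
    (hsm : ContDiffOn ℝ p ψ {0}ᶜ)
    (hbounds : ∀ z : Z, a * ‖z‖ ≤ ψ z ∧ ψ z ≤ b * ‖z‖) :
    ∃ B : Z → ℝ, ContDiff ℝ p B ∧ (∃ C : NNReal, LipschitzWith C B) ∧
      IsBounded (closure (support B)) ∧ (support B).Nonempty := by
  obtain ⟨Cψ, hCψ⟩ := hlip
  set θ : ℝ → ℝ := fun t => Real.smoothTransition (2 - t) with hθ_def
  have hθsmooth : ∀ n : ℕ∞, ContDiff ℝ n θ := fun n =>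
    Real.smoothTransition.contDiff.comp (contDiff_const.sub contDiff_id)
  have hθ1 : ∀ t : ℝ, t ≤ 1 → θ t = 1 := fun t ht =>
    Real.smoothTransition.one_of_one_le (by linarith)
  have hθ0 : ∀ t : ℝ, 2 ≤ t → θ t = 0 := fun t ht =>
    Real.smoothTransition.zero_of_nonpos (by linarith)
  set B : Z → ℝ := fun x => θ (ψ x) with hB_def
  have hψ0 : ψ 0 = 0 := by
    have h := hbounds 0
    simp only [norm_zero, mul_zero] at h
    linarith [h.1, h.2]
  refine ⟨B, ?_, ?_, ?_, ?_⟩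
  · rw [contDiff_iff_contDiffAt]
    intro x
    by_cases hx : x = 0
    · subst hx
      have hev : B =ᶠ[nhds (0 : Z)] (fun _ => 1) := by
        have hopen : IsOpen (Metric.ball (0 : Z) (1 / b)) := Metric.isOpen_ball
        have h0m : (0 : Z) ∈ Metric.ball (0 : Z) (1 / b) := by
          simp [Metric.mem_ball, one_div, inv_pos, hb]
        filter_upwards [hopen.mem_nhds h0m] with y hy
        rw [Metric.mem_ball, dist_zero_right] at hy
        have : ψ y ≤ b * ‖y‖ := (hbounds y).2
        have hlt : b * ‖y‖ < 1 := by
          rw [lt_div_iff₀ hb] at hy; linarith [hy]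
        exact hθ1 _ (by linarith)
      exact (contDiffAt_const (c := (1:ℝ))).congr_of_eventuallyEq hev
    · have hψat : ContDiffAt ℝ p ψ x :=
        hsm.contDiffAt (isOpen_compl_singleton.mem_nhds hx)
      exact ((hθsmooth p).contDiffAt).comp x hψat
  · obtain ⟨Cθ, hCθ⟩ := aux_st_lip
    refine ⟨Cθ * 1 * Cψ, (hCθ.comp ?_).comp hCψ⟩
    apply LipschitzWith.of_dist_le_mul
    intro s t
    have : dist (2 - s) (2 - t) = dist s t := by
      rw [Real.dist_eq, Real.dist_eq, show (2:ℝ) - s - (2 - t) = -(s - t) by ring, abs_neg]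
    rw [this]; simp
  · apply (Metric.isBounded_closedBall (x := (0:Z)) (r := 2 / a)).subset
    apply closure_minimal _ Metric.isClosed_closedBall
    intro x hx
    rw [mem_support] at hx
    have hψx : ψ x < 2 := by
      by_contra hge
      exact hx (hθ0 _ (not_lt.mp hge))
    have : a * ‖x‖ < 2 := lt_of_le_of_lt (hbounds x).1 hψx
    rw [Metric.mem_closedBall, dist_zero_right]
    rw [le_div_iff₀ ha]; linarith [this]
  · refine ⟨0, ?_⟩
    rw [mem_support, hB_def]
    simp only [hψ0]
    rw [hθ1 0 (by norm_num)]
    norm_num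

set_option maxHeartbeats 1000000 in
lemma aux_forward {Z : Type*} [NormedAddCommGroup Z] [NormedSpace ℝ Z]
    {p : ℕ∞} (b : Z → ℝ) (δ R : ℝ) (K : NNReal) (hδ : 0 < δ) (hR : 0 < R)
    (hsm : ContDiff ℝ p b) (hlip : LipschitzWith K b)
    (hnn : ∀ z, 0 ≤ b z) (hle1 : ∀ z, b z ≤ 1)
    (h1 : ∀ z : Z, ‖z‖ ≤ δ → b z = 1) (h0 : ∀ z : Z, R ≤ ‖z‖ → b z = 0)
    (heven : ∀ z : Z, b (-z) = b z) :
    ∃ a c : ℝ, 0 < a ∧ 0 < c ∧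
      ∃ ψ : Z → ℝ, (∃ C : NNReal, LipschitzWith C ψ) ∧ (∀ z : Z, 0 ≤ ψ z) ∧
        ContDiffOn ℝ p ψ {0}ᶜ ∧
        (∀ (t : ℝ) (z : Z), ψ (t • z) = |t| * ψ z) ∧
        (∀ z : Z, a * ‖z‖ ≤ ψ z ∧ ψ z ≤ c * ‖z‖) := by
  have hbc : Continuous b := hsm.continuous
  set g : Z → ℝ := fun x => ∫ t in Ioi (0:ℝ), b (t • x) with hg_def
  -- continuity of the integrand
  have hcont : ∀ x : Z, Continuous (fun t : ℝ => b (t • x)) :=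
    fun x => hbc.comp (continuous_id.smul continuous_const)
  -- vanishing of the integrand for large t
  have hvan : ∀ (x : Z), x ≠ 0 → ∀ t : ℝ, R / ‖x‖ < t → b (t • x) = 0 := by
    intro x hx t ht
    have hxn : 0 < ‖x‖ := norm_pos_iff.mpr hx
    apply h0
    rw [norm_smul, Real.norm_eq_abs]
    have htpos : 0 < t := lt_of_le_of_lt (le_of_lt (div_pos hR hxn)) ht
    rw [abs_of_pos htpos]
    rw [div_lt_iff₀ hxn] at ht
    linarith
  -- integrability
  have hint : ∀ (x : Z), x ≠ 0 → IntegrableOn (fun t : ℝ => b (t • x)) (Ioi 0) := by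
    intro x hx
    have hxn : 0 < ‖x‖ := norm_pos_iff.mpr hx
    have hM : 0 < R / ‖x‖ := div_pos hR hxn
    rw [← Ioc_union_Ioi_eq_Ioi hM.le]
    refine IntegrableOn.union ((hcont x).integrableOn_Ioc) ?_
    exact (integrableOn_congr_fun (g := fun _ => (0:ℝ))
      (fun t ht => hvan x hx t ht) measurableSet_Ioi).mpr integrableOn_zero
  -- truncation
  have htrunc : ∀ (x : Z), x ≠ 0 → ∀ M : ℝ, R / ‖x‖ ≤ M →
      g x = ∫ t in Ioc (0:ℝ) M, b (t • x) := by
    intro x hx M hM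
    have hxn : 0 < ‖x‖ := norm_pos_iff.mpr hx
    have hM0 : 0 < M := lt_of_lt_of_le (div_pos hR hxn) hM
    have hsplit : Ioi (0:ℝ) = Ioc 0 M ∪ Ioi M := (Ioc_union_Ioi_eq_Ioi hM0.le).symm
    rw [hg_def]
    simp only
    rw [hsplit, setIntegral_union (Ioc_disjoint_Ioi le_rfl) measurableSet_Ioi
      ((hcont x).integrableOn_Ioc)
      ((integrableOn_congr_fun (g := fun _ => (0:ℝ))
          (fun t ht => hvan x hx t (lt_of_le_of_lt hM ht)) measurableSet_Ioi).mpr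
          integrableOn_zero)]
    rw [setIntegral_congr_fun measurableSet_Ioi
      (fun t (ht : t ∈ Ioi M) => hvan x hx t (lt_of_le_of_lt hM ht))]
    simp
  -- bounds
  have hlb : ∀ (x : Z), x ≠ 0 → δ / ‖x‖ ≤ g x := by
    intro x hx
    have hxn : 0 < ‖x‖ := norm_pos_iff.mpr hx
    have hm : 0 < δ / ‖x‖ := div_pos hδ hxn
    have step1 : ∫ t in Ioc (0:ℝ) (δ / ‖x‖), b (t • x) = δ / ‖x‖ := by
      rw [setIntegral_congr_fun measurableSet_Ioc (g := fun _ => (1:ℝ))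
        (fun t ht => h1 _ (by
          rw [norm_smul, Real.norm_eq_abs, abs_of_pos ht.1]
          calc t * ‖x‖ ≤ δ / ‖x‖ * ‖x‖ := by
                exact mul_le_mul_of_nonneg_right ht.2 hxn.le
          _ = δ := div_mul_cancel₀ δ hxn.ne'))]
      simp [Real.volume_Ioc, ENNReal.toReal_ofReal hm.le, hm.le]
    calc δ / ‖x‖ = ∫ t in Ioc (0:ℝ) (δ / ‖x‖), b (t • x) := step1.symm
      _ ≤ g x := by
          apply setIntegral_mono_set (hint x hx)
          · exact Eventually.of_forall (fun t => hnn _)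
          · exact HasSubset.Subset.eventuallyLE Ioc_subset_Ioi_self
  have hub : ∀ (x : Z), x ≠ 0 → g x ≤ R / ‖x‖ := by
    intro x hx
    have hxn : 0 < ‖x‖ := norm_pos_iff.mpr hx
    have hM : 0 < R / ‖x‖ := div_pos hR hxn
    rw [htrunc x hx (R / ‖x‖) le_rfl]
    calc (∫ t in Ioc (0:ℝ) (R / ‖x‖), b (t • x))
        ≤ ∫ _ in Ioc (0:ℝ) (R / ‖x‖), (1:ℝ) := by
          apply setIntegral_mono_on ((hcont x).integrableOn_Ioc)
            (integrableOn_const measure_Ioc_lt_top.ne) measurableSet_Ioc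
          exact fun t _ => hle1 _
      _ = R / ‖x‖ := by simp [Real.volume_Ioc, ENNReal.toReal_ofReal hM.le, hM.le]
  have hgpos : ∀ (x : Z), x ≠ 0 → 0 < g x :=
    fun x hx => lt_of_lt_of_le (div_pos hδ (norm_pos_iff.mpr hx)) (hlb x hx)
  -- homogeneity of g
  have hghom : ∀ (s : ℝ), 0 < s → ∀ x : Z, g (s • x) = s⁻¹ * g x := by
    intro s hs x
    have : (fun t : ℝ => b (t • s • x)) = fun t : ℝ => b ((s * t) • x) := by
      funext t; rw [smul_smul, mul_comm]
    rw [hg_def]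
    simp only
    rw [this, integral_comp_mul_left_Ioi (fun u => b (u • x)) 0 hs]
    simp [smul_eq_mul]
  -- evenness of g
  have hgeven : ∀ x : Z, g (-x) = g x := by
    intro x
    rw [hg_def]
    simp only
    congr 1
    funext t
    rw [smul_neg, heven]
  -- ψ
  classical
  set ψ : Z → ℝ := fun x => if x = 0 then 0 else (g x)⁻¹ with hψ_def
  have hψ0 : ψ 0 = 0 := by simp [hψ_def]
  have hψne : ∀ x : Z, x ≠ 0 → ψ x = (g x)⁻¹ := fun x hx => if_neg hx
  have hψnn : ∀ z : Z, 0 ≤ ψ z := by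
    intro z
    by_cases hz : z = 0
    · simp [hz, hψ0]
    · rw [hψne z hz]; exact (inv_pos.mpr (hgpos z hz)).le
  have hψub : ∀ z : Z, ψ z ≤ δ⁻¹ * ‖z‖ := by
    intro z
    by_cases hz : z = 0
    · simp [hz, hψ0]
    · have hzn : 0 < ‖z‖ := norm_pos_iff.mpr hz
      rw [hψne z hz]
      have h1 : (g z)⁻¹ ≤ (δ / ‖z‖)⁻¹ :=
        inv_anti₀ (div_pos hδ hzn) (hlb z hz)
      rwa [inv_div, div_eq_inv_mul] at h1
  have hψlb : ∀ z : Z, R⁻¹ * ‖z‖ ≤ ψ z := by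
    intro z
    by_cases hz : z = 0
    · simp [hz, hψ0]
    · have hzn : 0 < ‖z‖ := norm_pos_iff.mpr hz
      rw [hψne z hz]
      have h1 : (R / ‖z‖)⁻¹ ≤ (g z)⁻¹ :=
        inv_anti₀ (hgpos z hz) (hub z hz)
      rwa [inv_div, div_eq_inv_mul] at h1
  -- smoothness of g away from 0
  have hgsmooth : ContDiffOn ℝ p g {0}ᶜ := by
    intro x₀ hx₀
    have hx₀ : x₀ ≠ 0 := hx₀
    have hx₀n : 0 < ‖x₀‖ := norm_pos_iff.mpr hx₀
    set s : Set Z := {x : Z | ‖x₀‖ / 2 < ‖x‖} with hs_def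
    have hs : IsOpen s := isOpen_lt continuous_const continuous_norm
    have hx₀s : x₀ ∈ s := by
      simp only [hs_def, mem_setOf_eq]; linarith
    set T : ℝ := 2 * R / ‖x₀‖ with hT_def
    have hT : 0 < T := by positivity
    set f : ℝ → ℝ := indicator (Ioi (0:ℝ)) (fun _ => (1:ℝ)) with hf_def
    have hfloc : LocallyIntegrable f volume :=
      (locallyIntegrable_const (1:ℝ)).indicator measurableSet_Ioi
    set v : Z → ℝ → ℝ := fun q t => b ((-t) • q) with hv_def
    have hgs : ∀ q : Z, ∀ t : ℝ, q ∈ s → t ∉ Icc (-T) T → v q t = 0 := by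
      intro q t hq ht
      have habs : T < |t| := by
        rw [mem_Icc, not_and_or, not_le, not_le] at ht
        rcases ht with h | h
        · rw [abs_of_neg (by linarith)]; linarith
        · rw [abs_of_pos (by linarith)]; linarith
      have hqn : ‖x₀‖ / 2 < ‖q‖ := hq
      apply h0
      rw [norm_smul, Real.norm_eq_abs, abs_neg]
      calc R = T * (‖x₀‖ / 2) := by
            rw [hT_def]; field_simp
        _ ≤ |t| * ‖q‖ := by
            apply mul_le_mul habs.le hqn.le (by linarith) (abs_nonneg t)
    have hkernel : ContDiffOn ℝ p (↿v) (s ×ˢ univ) :=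
      (hsm.comp ((contDiff_snd.neg).smul contDiff_fst)).contDiffOn
    have key : ContDiffOn ℝ p
        (fun x : Z => (f ⋆[ContinuousLinearMap.mul ℝ ℝ, volume] v x) 0) s :=
      contDiffOn_convolution_right_with_param_comp (ContinuousLinearMap.mul ℝ ℝ)
        contDiffOn_const hs isCompact_Icc hgs hfloc hkernel
    have heqg : ∀ x ∈ s, g x = (f ⋆[ContinuousLinearMap.mul ℝ ℝ, volume] v x) 0 := by
      intro x hx
      rw [convolution]
      have : ∀ t : ℝ, (ContinuousLinearMap.mul ℝ ℝ) (f t) (v x (0 - t)) =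
          indicator (Ioi (0:ℝ)) (fun t => b (t • x)) t := by
        intro t
        simp only [ContinuousLinearMap.mul_apply', hf_def, hv_def, zero_sub, neg_neg]
        by_cases ht : t ∈ Ioi (0:ℝ)
        · rw [indicator_of_mem ht, indicator_of_mem ht, one_mul]
        · rw [indicator_of_notMem ht, indicator_of_notMem ht, zero_mul]
      simp_rw [this]
      rw [integral_indicator measurableSet_Ioi]
    have : ContDiffOn ℝ p g s := key.congr heqg
    exact (this.contDiffAt (hs.mem_nhds hx₀s)).contDiffWithinAt
  have hψsmooth : ContDiffOn ℝ p ψ {0}ᶜ := by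
    have h := hgsmooth.inv (fun x hx => (hgpos x hx).ne')
    exact h.congr (fun x hx => hψne x hx)
  -- homogeneity of ψ
  have hψhom : ∀ (t : ℝ) (z : Z), ψ (t • z) = |t| * ψ z := by
    intro t z
    by_cases hz : z = 0
    · simp [hz, hψ0]
    by_cases ht : t = 0
    · simp [ht, hψ0]
    rcases lt_or_gt_of_ne ht with htneg | htpos
    · have htz : t • z ≠ 0 := smul_ne_zero ht hz
      have hkey : t • z = -((-t) • z) := by rw [neg_smul, neg_neg]
      rw [hψne _ htz, hψne _ hz, hkey, hgeven, hghom (-t) (by linarith) z]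
      rw [mul_inv, inv_inv, abs_of_neg htneg]
    · have htz : t • z ≠ 0 := smul_ne_zero ht hz
      rw [hψne _ htz, hψne _ hz, hghom t htpos z, mul_inv, inv_inv, abs_of_pos htpos]
  -- the difference estimate for g
  have hgdiff : ∀ x y : Z, x ≠ 0 → y ≠ 0 →
      |g x - g y| ≤ (K * ‖x - y‖) * (R / min ‖x‖ ‖y‖) ^ 2 / 2 := by
    intro x y hx hy
    have hxn : 0 < ‖x‖ := norm_pos_iff.mpr hx
    have hyn : 0 < ‖y‖ := norm_pos_iff.mpr hy
    set m : ℝ := min ‖x‖ ‖y‖ with hm_def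
    have hmpos : 0 < m := lt_min hxn hyn
    set M : ℝ := R / m with hM_def
    have hMpos : 0 < M := div_pos hR hmpos
    have hMx : R / ‖x‖ ≤ M := by
      rw [hM_def]; gcongr; exact min_le_left _ _
    have hMy : R / ‖y‖ ≤ M := by
      rw [hM_def]; gcongr; exact min_le_right _ _
    rw [htrunc x hx M hMx, htrunc y hy M hMy]
    rw [← integral_sub ((hcont x).integrableOn_Ioc) ((hcont y).integrableOn_Ioc)]
    have step1 : |∫ t in Ioc (0:ℝ) M, (b (t • x) - b (t • y))|
        ≤ ∫ t in Ioc (0:ℝ) M, |b (t • x) - b (t • y)| := by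
      simpa [Real.norm_eq_abs] using
        norm_integral_le_integral_norm (μ := volume.restrict (Ioc (0:ℝ) M))
          (fun t => b (t • x) - b (t • y))
    have step2 : (∫ t in Ioc (0:ℝ) M, |b (t • x) - b (t • y)|)
        ≤ ∫ t in Ioc (0:ℝ) M, (K * ‖x - y‖) * t := by
      apply setIntegral_mono_on
      · exact ((hcont x).sub (hcont y)).abs.integrableOn_Ioc
      · exact (continuous_const.mul continuous_id).integrableOn_Ioc
      · exact measurableSet_Ioc
      · intro t ht
        have hd := hlip.dist_le_mul (t • x) (t • y)
        rw [Real.dist_eq] at hd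
        calc |b (t • x) - b (t • y)| ≤ K * dist (t • x) (t • y) := hd
          _ = K * (|t| * ‖x - y‖) := by
              rw [dist_eq_norm, ← smul_sub, norm_smul, Real.norm_eq_abs]
          _ = K * ‖x - y‖ * t := by rw [abs_of_pos ht.1]; ring
    have step3 : (∫ t in Ioc (0:ℝ) M, (K * ‖x - y‖) * t)
        = (K * ‖x - y‖) * (M ^ 2 / 2) := by
      rw [MeasureTheory.integral_const_mul]
      congr 1
      rw [← intervalIntegral.integral_of_le hMpos.le]
      rw [integral_id]
      ring
    calc |(∫ t in Ioc (0:ℝ) M, (b (t • x) - b (t • y)))|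
        ≤ ∫ t in Ioc (0:ℝ) M, |b (t • x) - b (t • y)| := step1
      _ ≤ ∫ t in Ioc (0:ℝ) M, (K * ‖x - y‖) * t := step2
      _ = (K * ‖x - y‖) * (M ^ 2 / 2) := step3
      _ = (K * ‖x - y‖) * (R / m) ^ 2 / 2 := by rw [hM_def]; ring
  -- Lipschitz constant
  set C₀ : ℝ := 5 / δ + 3 * (K : ℝ) * R ^ 2 / (4 * δ ^ 2) with hC₀_def
  have hC₀nn : 0 ≤ C₀ := by positivity
  have hcore : ∀ x y : Z, ‖y‖ ≤ ‖x‖ → |ψ x - ψ y| ≤ C₀ * ‖x - y‖ := by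
    intro x y hyx
    by_cases hcase : ‖y‖ ≤ 2 * ‖x - y‖
    · -- easy case
      have h1 : ψ x ≤ δ⁻¹ * ‖x‖ := hψub x
      have h2 : ψ y ≤ δ⁻¹ * ‖y‖ := hψub y
      have h3 : ‖x‖ ≤ ‖y‖ + ‖x - y‖ := by
        calc ‖x‖ = ‖y + (x - y)‖ := by rw [add_sub_cancel]
          _ ≤ ‖y‖ + ‖x - y‖ := norm_add_le _ _
      have habs : |ψ x - ψ y| ≤ ψ x + ψ y :=
        abs_le.mpr ⟨by linarith [hψnn x, hψnn y], by linarith [hψnn x, hψnn y]⟩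
      have hδinv : (0:ℝ) < δ⁻¹ := inv_pos.mpr hδ
      calc |ψ x - ψ y| ≤ ψ x + ψ y := habs
        _ ≤ δ⁻¹ * ‖x‖ + δ⁻¹ * ‖y‖ := by linarith
        _ ≤ δ⁻¹ * (5 * ‖x - y‖) := by
            rw [← mul_add]
            apply mul_le_mul_of_nonneg_left _ hδinv.le
            linarith
        _ = 5 / δ * ‖x - y‖ := by rw [div_eq_inv_mul]; ring
        _ ≤ C₀ * ‖x - y‖ := by
            apply mul_le_mul_of_nonneg_right _ (norm_nonneg _)
            rw [hC₀_def]
            have : (0:ℝ) ≤ 3 * (K : ℝ) * R ^ 2 / (4 * δ ^ 2) := by positivity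
            linarith
    · -- hard case
      push_neg at hcase
      have hyn : 0 < ‖y‖ := lt_of_le_of_lt (by positivity) hcase
      have hxn : 0 < ‖x‖ := lt_of_lt_of_le hyn hyx
      have hy : y ≠ 0 := norm_pos_iff.mp hyn
      have hx : x ≠ 0 := norm_pos_iff.mp hxn
      have hx32 : ‖x‖ ≤ 3 / 2 * ‖y‖ := by
        have h3 : ‖x‖ ≤ ‖y‖ + ‖x - y‖ := by
          calc ‖x‖ = ‖y + (x - y)‖ := by rw [add_sub_cancel]
            _ ≤ ‖y‖ + ‖x - y‖ := norm_add_le _ _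
        linarith
      have hmin : min ‖x‖ ‖y‖ = ‖y‖ := min_eq_right hyx
      have hgd := hgdiff x y hx hy
      rw [hmin] at hgd
      have hgx := hgpos x hx
      have hgy := hgpos y hy
      have hgxl := hlb x hx
      have hgyl := hlb y hy
      have hident : |ψ x - ψ y| = |g y - g x| / (g x * g y) := by
        rw [hψne x hx, hψne y hy, inv_sub_inv hgx.ne' hgy.ne', abs_div,
          abs_of_pos (mul_pos hgx hgy)]
      rw [hident]
      have hprod : δ / ‖x‖ * (δ / ‖y‖) ≤ g x * g y :=
        mul_le_mul hgxl hgyl (div_pos hδ hyn).le hgx.le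
      have hprodpos : (0:ℝ) < δ / ‖x‖ * (δ / ‖y‖) :=
        mul_pos (div_pos hδ hxn) (div_pos hδ hyn)
      calc |g y - g x| / (g x * g y)
          ≤ ((K * ‖x - y‖) * (R / ‖y‖) ^ 2 / 2) / (δ / ‖x‖ * (δ / ‖y‖)) := by
            apply div_le_div₀ (by positivity) _ hprodpos hprod
            rw [abs_sub_comm]; exact hgd
        _ = (K : ℝ) * R ^ 2 * ‖x‖ * ‖x - y‖ / (2 * δ ^ 2 * ‖y‖) := by
            field_simp
        _ ≤ 3 * (K : ℝ) * R ^ 2 / (4 * δ ^ 2) * ‖x - y‖ := by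
            rw [div_le_iff₀ (by positivity)]
            have hexp : 3 * (K : ℝ) * R ^ 2 / (4 * δ ^ 2) * ‖x - y‖ * (2 * δ ^ 2 * ‖y‖)
                = 3 / 2 * (K : ℝ) * R ^ 2 * ‖x - y‖ * ‖y‖ := by
              field_simp
              ring
            rw [hexp]
            nlinarith [mul_le_mul_of_nonneg_left hx32
              (by positivity : (0:ℝ) ≤ (K:ℝ) * R ^ 2 * ‖x - y‖)]
        _ ≤ C₀ * ‖x - y‖ := by
            apply mul_le_mul_of_nonneg_right _ (norm_nonneg _)
            rw [hC₀_def]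
            have : (0:ℝ) ≤ 5 / δ := by positivity
            linarith
  have hψlip : ∃ C : NNReal, LipschitzWith C ψ := by
    refine ⟨C₀.toNNReal, LipschitzWith.of_dist_le_mul fun x y => ?_⟩
    rw [Real.dist_eq, Real.coe_toNNReal _ hC₀nn, dist_eq_norm]
    rcases le_total ‖y‖ ‖x‖ with h | h
    · exact hcore x y h
    · rw [abs_sub_comm, ← norm_neg (x - y), neg_sub]
      exact hcore y x h
  -- conclusion
  refine ⟨R⁻¹, δ⁻¹, inv_pos.mpr hR, inv_pos.mpr hδ, ψ, hψlip, hψnn, hψsmooth, hψhom,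
    fun z => ⟨hψlb z, hψub z⟩⟩

theorem lipschitz_smooth_bump_iff_homogeneous_smooth_equivalent_norm
    {Z : Type*} [NormedAddCommGroup Z] [NormedSpace ℝ Z] [CompleteSpace Z]
    (p : ℕ∞) (hp : 1 ≤ p) :
    (∃ b : Z → ℝ, ContDiff ℝ p b ∧ (∃ C : NNReal, LipschitzWith C b) ∧
        IsBounded (closure (support b)) ∧ (support b).Nonempty) ↔
    (∃ a b : ℝ, 0 < a ∧ 0 < b ∧
      ∃ ψ : Z → ℝ, (∃ C : NNReal, LipschitzWith C ψ) ∧ (∀ z : Z, 0 ≤ ψ z) ∧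
        ContDiffOn ℝ p ψ {0}ᶜ ∧
        (∀ (t : ℝ) (z : Z), ψ (t • z) = |t| * ψ z) ∧
        (∀ z : Z, a * ‖z‖ ≤ ψ z ∧ ψ z ≤ b * ‖z‖)) := by
  constructor
  · rintro ⟨b₀, hsm₀, ⟨C₀, hlip₀⟩, hbd, hne⟩
    obtain ⟨b, δ, R, K, hδ, hR, hsm, hlip, hnn, hle1, h1, h0, heven⟩ :=
      aux_nice_bump b₀ hsm₀ C₀ hlip₀ hbd hne
    obtain ⟨a, c, ha, hc, ψ, hψ⟩ := aux_forward b δ R K hδ hR hsm hlip hnn hle1 h1 h0 heven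
    exact ⟨a, c, ha, hc, ψ, hψ⟩
  · rintro ⟨a, c, ha, hc, ψ, hlip, hnn, hsmooth, hhom, hbounds⟩
    exact aux_backward a c ha hc ψ hlip hsmooth hbounds
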